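/- Let π be a permutation of {1,...,m}, 1 ≤ t ≤ m-1 with π(m) > π(α) for all 1 ≤ α ≤ t. Let i < j be integers in [0, 2^m) whose binary digits agree on positions π(1),...,π(t) (all equal to prescribed values d_1,...,d_t) but differ at position π(m). Then j - i ≥ ∑_{α=1}^{t} 2^{π(α)-1} + 1. -/

import Mathlib

open Finset

/-- `bit l i` is the `l`-th binary digit of `i` (positions indexed from 1). -/
def bit (l i : ℕ) : ℕ := i / 2 ^ (l - 1) % 2

lemma digitSum (p : ℕ) : ∀ r : ℕ, r < 2 ^ p → ∑ l ∈ Finset.range p, (r / 2 ^ l % 2) * 2 ^ l = r := by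
  induction p with
  | zero => intro r hr; interval_cases r; simp
  | succ p ih =>
    intro r hr
    rw [Finset.sum_range_succ']
    have h2 : ∀ l, r / 2 ^ (l + 1) = (r / 2) / 2 ^ l := by
      intro l; rw [pow_succ, mul_comm, Nat.div_div_eq_div_mul, mul_comm]
    simp only [h2]
    have hsum : ∑ l ∈ Finset.range p, (r / 2 / 2 ^ l % 2) * 2 ^ (l + 1)
        = (∑ l ∈ Finset.range p, (r / 2 / 2 ^ l % 2) * 2 ^ l) * 2 := by
      rw [Finset.sum_mul]
      apply Finset.sum_congr rfl
      intro l _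
      rw [pow_succ, mul_assoc]
    rw [hsum, ih (r / 2) (by omega)]
    simp only [pow_zero, Nat.div_one, mul_one]
    omega

lemma bit_mod (p l i : ℕ) (h : l < p) : i % 2 ^ p / 2 ^ l % 2 = i / 2 ^ l % 2 := by
  conv_rhs => rw [← Nat.div_add_mod i (2 ^ p)]
  have hf : 2 ^ p = 2 ^ l * (2 * 2 ^ (p - l - 1)) := by
    rw [← pow_succ', ← pow_add]; congr 1; omega
  rw [hf, mul_assoc, Nat.mul_comm (2 ^ l), Nat.add_comm,
    Nat.add_mul_div_left _ _ (Nat.two_pow_pos l)]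
  rw [Nat.mul_comm, mul_assoc, Nat.add_mul_mod_self_left]

lemma diff_bound (p : ℕ) (Q : Finset ℕ) (hQ : Q ⊆ Finset.range p) (r r' : ℕ)
    (hr : r < 2 ^ p) (hr' : r' < 2 ^ p)
    (hag : ∀ q ∈ Q, r / 2 ^ q % 2 = r' / 2 ^ q % 2) :
    (r : ℤ) - r' ≤ 2 ^ p - 1 - ∑ q ∈ Q, 2 ^ q := by
  have h1 := digitSum p r hr
  have h2 := digitSum p r' hr'
  have c1 : ((∑ l ∈ Finset.range p, (r / 2 ^ l % 2) * 2 ^ l : ℕ) : ℤ)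
      = ∑ l ∈ Finset.range p, ((r / 2 ^ l % 2 : ℕ) : ℤ) * 2 ^ l := by push_cast; rfl
  have c2 : ((∑ l ∈ Finset.range p, (r' / 2 ^ l % 2) * 2 ^ l : ℕ) : ℤ)
      = ∑ l ∈ Finset.range p, ((r' / 2 ^ l % 2 : ℕ) : ℤ) * 2 ^ l := by push_cast; rfl
  have key : (r : ℤ) - r' = ∑ l ∈ Finset.range p \ Q,
      (((r / 2 ^ l % 2 : ℕ) : ℤ) - ((r' / 2 ^ l % 2 : ℕ) : ℤ)) * 2 ^ l := by
    have step : (r : ℤ) - r' = ∑ l ∈ Finset.range p,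
        (((r / 2 ^ l % 2 : ℕ) : ℤ) - ((r' / 2 ^ l % 2 : ℕ) : ℤ)) * 2 ^ l := by
      simp only [sub_mul, Finset.sum_sub_distrib]
      rw [← c1, ← c2, h1, h2]
    rw [step, ← Finset.sum_sdiff hQ, add_eq_left]
    apply Finset.sum_eq_zero
    intro q hq
    rw [hag q hq]; ring
  rw [key]
  have geo : ∀ n : ℕ, ∑ l ∈ Finset.range n, (2 : ℤ) ^ l = 2 ^ n - 1 := by
    intro n; induction n with
    | zero => simp
    | succ n ih => rw [Finset.sum_range_succ, ih]; ring
  have hsum : ∑ l ∈ Finset.range p \ Q, (2 : ℤ) ^ l = 2 ^ p - 1 - ∑ q ∈ Q, 2 ^ q := by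
    rw [eq_sub_iff_add_eq, Finset.sum_sdiff hQ, geo]
  rw [← hsum]
  apply Finset.sum_le_sum
  intro l _
  have hb : r / 2 ^ l % 2 ≤ 1 := by omega
  have hd : (((r / 2 ^ l % 2 : ℕ) : ℤ) - ((r' / 2 ^ l % 2 : ℕ) : ℤ)) ≤ 1 := by
    have h1 : ((r / 2 ^ l % 2 : ℕ) : ℤ) ≤ 1 := by exact_mod_cast hb
    have h2 : (0 : ℤ) ≤ ((r' / 2 ^ l % 2 : ℕ) : ℤ) := Int.natCast_nonneg _
    omega
  nlinarith [pow_pos (by norm_num : (0:ℤ) < 2) l]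

theorem stmt9 (m t : ℕ) (ht1 : 1 ≤ t) (ht2 : t ≤ m - 1)
    (π : Equiv.Perm ℕ) (hπ : ∀ α, α ∈ Finset.Icc 1 m ↔ π α ∈ Finset.Icc 1 m)
    (hmax : ∀ α ∈ Finset.Icc 1 t, π α < π m)
    (i j : ℕ) (hij : i < j) (hj : j < 2 ^ m)
    (hagree : ∀ α ∈ Finset.Icc 1 t, bit (π α) i = bit (π α) j)
    (hdiff : bit (π m) i ≠ bit (π m) j) :
    (∑ α ∈ Finset.Icc 1 t, 2 ^ (π α - 1)) + 1 ≤ j - i := by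
  have hm2 : 2 ≤ m := by omega
  have hmIcc : m ∈ Finset.Icc 1 m := by simp only [Finset.mem_Icc]; omega
  have hπm : 1 ≤ π m ∧ π m ≤ m := by
    have h := (hπ m).mp hmIcc
    simpa [Finset.mem_Icc] using h
  have hπα : ∀ α ∈ Finset.Icc 1 t, 1 ≤ π α := by
    intro α hα
    simp only [Finset.mem_Icc] at hα
    have hαIcc : α ∈ Finset.Icc 1 m := by simp only [Finset.mem_Icc]; omega
    have h := (hπ α).mp hαIcc
    simp only [Finset.mem_Icc] at h; omega
  set p := π m - 1 with hp
  set Q : Finset ℕ := (Finset.Icc 1 t).image (fun α => π α - 1) with hQdef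
  have hQsub : Q ⊆ Finset.range p := by
    intro q hq
    simp only [hQdef, Finset.mem_image] at hq
    obtain ⟨α, hα, rfl⟩ := hq
    have h1 := hπα α hα
    have h2 := hmax α hα
    simp only [Finset.mem_range]; omega
  have hQsum : ∑ q ∈ Q, (2 : ℤ) ^ q = ∑ α ∈ Finset.Icc 1 t, (2 : ℤ) ^ (π α - 1) := by
    rw [hQdef, Finset.sum_image]
    intro a ha b hb hab
    have h1 := hπα a ha
    have h2 := hπα b hb
    exact π.injective (by simp only at hab; omega)
  set r := i % 2 ^ p with hr
  set r' := j % 2 ^ p with hr'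
  have hrlt : r < 2 ^ p := Nat.mod_lt _ (Nat.two_pow_pos p)
  have hrlt' : r' < 2 ^ p := Nat.mod_lt _ (Nat.two_pow_pos p)
  have hag : ∀ q ∈ Q, r / 2 ^ q % 2 = r' / 2 ^ q % 2 := by
    intro q hq
    simp only [hQdef, Finset.mem_image] at hq
    obtain ⟨α, hα, rfl⟩ := hq
    have hlt : π α - 1 < p := Finset.mem_range.mp
      (hQsub (Finset.mem_image_of_mem _ hα))
    rw [hr, hr', bit_mod p _ i hlt, bit_mod p _ j hlt]
    exact hagree α hα
  have hdb := diff_bound p Q hQsub r r' hrlt hrlt' hag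
  have hA : i / 2 ^ p % 2 ≠ j / 2 ^ p % 2 := hdiff
  have hAB : i / 2 ^ p < j / 2 ^ p := by
    have hle : i / 2 ^ p ≤ j / 2 ^ p := Nat.div_le_div_right hij.le
    rcases lt_or_eq_of_le hle with h | h
    · exact h
    · exact absurd (by rw [h]) hA
  have hi' : i = 2 ^ p * (i / 2 ^ p) + r := (Nat.div_add_mod i (2 ^ p)).symm
  have hj' : j = 2 ^ p * (j / 2 ^ p) + r' := (Nat.div_add_mod j (2 ^ p)).symm
  have key : (∑ α ∈ Finset.Icc 1 t, (2 : ℤ) ^ (π α - 1)) + 1 ≤ (j : ℤ) - i := by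
    have h2p : (2 : ℤ) ^ p ≤ ((2 : ℤ) ^ p) * (j / 2 ^ p : ℕ) - ((2 : ℤ) ^ p) * (i / 2 ^ p : ℕ) := by
      have hc : ((i / 2 ^ p : ℕ) : ℤ) + 1 ≤ ((j / 2 ^ p : ℕ) : ℤ) := by exact_mod_cast hAB
      nlinarith [pow_pos (by norm_num : (0:ℤ) < 2) p]
    have hi2 : (i : ℤ) = 2 ^ p * ((i / 2 ^ p : ℕ) : ℤ) + (r : ℤ) := by
      have := congrArg (Nat.cast : ℕ → ℤ) hi'
      push_cast at this ⊢; linarith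
    have hj2 : (j : ℤ) = 2 ^ p * ((j / 2 ^ p : ℕ) : ℤ) + (r' : ℤ) := by
      have := congrArg (Nat.cast : ℕ → ℤ) hj'
      push_cast at this ⊢; linarith
    rw [hQsum] at hdb
    linarith
  have hcast : (∑ α ∈ Finset.Icc 1 t, (2 : ℤ) ^ (π α - 1))
      = ((∑ α ∈ Finset.Icc 1 t, 2 ^ (π α - 1) : ℕ) : ℤ) := by push_cast; rfl
  rw [hcast] at key
  omega
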